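/- For every real α ≥ −1, the ideal I_α := {S ⊆ ℕ : d*_α(S) = 0} is thinnable, where d*_α(S) = limsup_{n→∞} (Σ_{i∈S∩[1,n]} i^α)/(Σ_{i∈[1,n]} i^α) is the upper α-density. -/

import Mathlib

open Filter Topology MeasureTheory Set

/-- The canonical (increasing) enumeration of a set of natural numbers. -/
noncomputable def enumOf (A : Set ℕ) : ℕ → ℕ := Nat.nth (· ∈ A)

/-- `idxSet A B` is the set `A_B = {a_b : b ∈ B}`, where `{a_n}` is the canonical
enumeration of `A`. -/
noncomputable def idxSet (A B : Set ℕ) : Set ℕ := enumOf A '' B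

/-- `seqLE X Y` means `X ≤ Y`, i.e. `x_n ≤ y_n` for all `n`, for the canonical
enumerations `{x_n}` of `X` and `{y_n}` of `Y`. -/
def seqLE (X Y : Set ℕ) : Prop := ∀ n, enumOf X n ≤ enumOf Y n

/-- `A` has asymptotic density `c`: `|A ∩ [1,n]| / n → c`. -/
def HasDensity (A : Set ℕ) (c : ℝ) : Prop :=
  Tendsto (fun n : ℕ => ((A ∩ Set.Icc 1 n).ncard : ℝ) / n) atTop (𝓝 c)

/-- An ideal on ℕ: closed under finite unions and subsets, contains all finite sets,
and is not the whole power set. -/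
def IsIdeal (I : Set (Set ℕ)) : Prop :=
  (∀ A B : Set ℕ, A ∈ I → B ∈ I → A ∪ B ∈ I) ∧
  (∀ A B : Set ℕ, A ⊆ B → B ∈ I → A ∈ I) ∧
  (∀ A : Set ℕ, A.Finite → A ∈ I) ∧
  Set.univ ∉ I

/-- `I` is weakly thinnable: `A_B ∉ I` whenever `A` admits non-zero asymptotic density
and `B ∉ I`. -/
def WeaklyThinnable (I : Set (Set ℕ)) : Prop :=
  ∀ A B : Set ℕ, (∃ c : ℝ, c ≠ 0 ∧ HasDensity A c) → B ∉ I → idxSet A B ∉ I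

/-- `I` is thinnable: weakly thinnable, `B_A ∉ I` whenever `A` admits non-zero asymptotic
density and `B ∉ I`, and `X ∉ I` whenever `X ≤ Y` and `Y ∉ I`. -/
def Thinnable (I : Set (Set ℕ)) : Prop :=
  WeaklyThinnable I ∧
  (∀ A B : Set ℕ, (∃ c : ℝ, c ≠ 0 ∧ HasDensity A c) → B ∉ I → idxSet B A ∉ I) ∧
  (∀ X Y : Set ℕ, X.Infinite → Y.Infinite → seqLE X Y → Y ∉ I → X ∉ I)

/-- `I` is strechable: `kA ∉ I` for all (positive) `k` and all `A ∉ I`. -/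
def Strechable (I : Set (Set ℕ)) : Prop :=
  ∀ k : ℕ, 0 < k → ∀ A : Set ℕ, A ∉ I → (fun a => k * a) '' A ∉ I

/-- The upper `α`-density `d⋆_α(S) = limsup_n (∑_{i ∈ S ∩ [1,n]} i^α) / (∑_{i ∈ [1,n]} i^α)`. -/
noncomputable def upperAlphaDensity (α : ℝ) (S : Set ℕ) : ℝ :=
  limsup (fun n : ℕ =>
    (∑ i ∈ Finset.Icc 1 n, S.indicator (fun i : ℕ => (i : ℝ) ^ α) i) /
      (∑ i ∈ Finset.Icc 1 n, (i : ℝ) ^ α)) atTop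

/-- The ideal `I_α` of sets with zero upper `α`-density. -/
def alphaIdeal (α : ℝ) : Set (Set ℕ) := {S | upperAlphaDensity α S = 0}

namespace IAux

variable {α : ℝ}


noncomputable def del (α : ℝ) (n : ℕ) : ℝ := ∑ i ∈ Finset.Icc 1 n, (i : ℝ) ^ α

noncomputable def numer (α : ℝ) (S : Set ℕ) (n : ℕ) : ℝ :=
  ∑ i ∈ Finset.Icc 1 n, S.indicator (fun i : ℕ => (i : ℝ) ^ α) i

noncomputable def aden (α : ℝ) (S : Set ℕ) (n : ℕ) : ℝ := numer α S n / del α n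


lemma w_nonneg (i : ℕ) : 0 ≤ (i : ℝ) ^ α := Real.rpow_nonneg (Nat.cast_nonneg i) α

lemma w_pos {i : ℕ} (hi : 1 ≤ i) : 0 < (i : ℝ) ^ α :=
  Real.rpow_pos_of_pos (by exact_mod_cast hi) α

lemma ind_nonneg (S : Set ℕ) (i : ℕ) : 0 ≤ S.indicator (fun i : ℕ => (i : ℝ) ^ α) i :=
  Set.indicator_nonneg (fun j _ => w_nonneg j) i

lemma numer_nonneg (S : Set ℕ) (n : ℕ) : 0 ≤ numer α S n :=
  Finset.sum_nonneg fun i _ => ind_nonneg S i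

lemma del_nonneg (n : ℕ) : 0 ≤ del α n := Finset.sum_nonneg fun i _ => w_nonneg i

lemma numer_le_del (S : Set ℕ) (n : ℕ) : numer α S n ≤ del α n :=
  Finset.sum_le_sum fun i _ => Set.indicator_le_self' (fun j _ => w_nonneg j) i

lemma del_pos {n : ℕ} (hn : 1 ≤ n) : 0 < del α n := by
  have h1 : (1 : ℕ) ∈ Finset.Icc 1 n := by simp [hn]
  have := Finset.single_le_sum (f := fun i : ℕ => (i : ℝ) ^ α) (fun i _ => w_nonneg i) h1
  have h2 : (0:ℝ) < (1:ℕ) ^ α := w_pos le_rfl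
  unfold del; linarith

lemma del_mono : Monotone (del α) := by
  intro a b hab
  exact Finset.sum_le_sum_of_subset_of_nonneg
    (Finset.Icc_subset_Icc_right hab) (fun i _ _ => w_nonneg i)

lemma aden_nonneg (S : Set ℕ) (n : ℕ) : 0 ≤ aden α S n :=
  div_nonneg (numer_nonneg S n) (del_nonneg n)

lemma aden_le_one (S : Set ℕ) (n : ℕ) : aden α S n ≤ 1 := by
  rcases Nat.eq_zero_or_pos n with h | h
  · subst h
    simp [aden, numer, del]
  · rw [aden, div_le_one (del_pos h)]
    exact numer_le_del S n

lemma del_tendsto (hα : -1 ≤ α) : Tendsto (del α) atTop atTop := by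
  have hbound : ∀ n : ℕ, (∑ i ∈ Finset.range n, (1 : ℝ) / (i + 1)) ≤ del α n := by
    intro n
    have : ∑ i ∈ Finset.range n, (1:ℝ)/(i+1) = ∑ i ∈ Finset.Icc 1 n, (1:ℝ)/i := by
      rw [← Finset.Ico_add_one_right_eq_Icc, Finset.sum_Ico_eq_sum_range]
      have hnn : n + 1 - 1 = n := by omega
      rw [hnn]
      refine Finset.sum_congr rfl fun i _ => ?_
      push_cast; rw [add_comm]
    rw [this]
    apply Finset.sum_le_sum
    intro i hi
    have hi1 : (1:ℝ) ≤ (i:ℝ) := by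
      have := (Finset.mem_Icc.mp hi).1; exact_mod_cast this
    have h2 := Real.rpow_le_rpow_of_exponent_le hi1 hα
    rw [Real.rpow_neg (by linarith), Real.rpow_one] at h2
    rw [one_div]
    exact h2
  exact tendsto_atTop_mono hbound Real.tendsto_sum_range_one_div_nat_succ_atTop

/-- Key growth lower bound : `n^(α+1) ≤ 2^(α+1) * del α n`. -/
lemma rpow_le_del (hα : -1 ≤ α) {n : ℕ} (hn : 1 ≤ n) :
    (n : ℝ) ^ (α + 1) ≤ (2 : ℝ) ^ (α + 1) * del α n := by
  have hn0 : (0:ℝ) < n := by exact_mod_cast hn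
  rcases le_or_gt 0 α with hpos | hneg
  · -- α ≥ 0 : use the top half of the interval
    set h := n / 2 with hh
    have hsub : Finset.Icc (h+1) n ⊆ Finset.Icc 1 n :=
      Finset.Icc_subset_Icc_left (Nat.le_add_left 1 h)
    have hcard : (Finset.Icc (h+1) n).card = n - h := by
      rw [Nat.card_Icc]; omega
    have hlow : ∀ i ∈ Finset.Icc (h+1) n, ((n:ℝ)/2) ^ α ≤ (i:ℝ) ^ α := by
      intro i hi
      have h1 : (n:ℝ)/2 ≤ (i:ℝ) := by
        have := (Finset.mem_Icc.mp hi).1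
        have h2 : (h:ℝ) + 1 ≤ (i:ℝ) := by exact_mod_cast this
        have h3 : (n:ℝ) ≤ 2 * h + 2 := by
          have hh2 : n ≤ 2 * h + 2 := by omega
          exact_mod_cast hh2
        linarith
      exact Real.rpow_le_rpow (by positivity) h1 hpos
    have hsum : ((n - h : ℕ) : ℝ) * ((n:ℝ)/2) ^ α ≤ del α n := by
      calc ((n - h : ℕ) : ℝ) * ((n:ℝ)/2) ^ α
          = (Finset.Icc (h+1) n).card • ((n:ℝ)/2) ^ α := by
            rw [hcard, nsmul_eq_mul]
        _ ≤ ∑ i ∈ Finset.Icc (h+1) n, (i:ℝ) ^ α := Finset.card_nsmul_le_sum _ _ _ hlow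
        _ ≤ del α n := Finset.sum_le_sum_of_subset_of_nonneg hsub (fun i _ _ => w_nonneg i)
    have hhalf : (n:ℝ)/2 ≤ ((n - h : ℕ) : ℝ) := by
      have h1 : h ≤ n := Nat.div_le_self n 2
      have h2 : 2 * h ≤ n := by omega
      rw [Nat.cast_sub h1]
      have : (2:ℝ) * h ≤ n := by exact_mod_cast h2
      linarith
    have key : ((n:ℝ)/2) ^ (α+1) ≤ del α n := by
      have : ((n:ℝ)/2) ^ (α+1) = ((n:ℝ)/2) ^ α * ((n:ℝ)/2) :=
        Real.rpow_add_one (by positivity) α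
      rw [this]
      calc ((n:ℝ)/2) ^ α * ((n:ℝ)/2) ≤ ((n:ℝ)/2) ^ α * ((n - h : ℕ) : ℝ) := by
            apply mul_le_mul_of_nonneg_left hhalf (by positivity)
        _ = ((n - h : ℕ) : ℝ) * ((n:ℝ)/2) ^ α := by ring
        _ ≤ del α n := hsum
    have hdiv : ((n:ℝ)/2) ^ (α+1) = (n:ℝ) ^ (α+1) / (2:ℝ) ^ (α+1) :=
      Real.div_rpow (by positivity) (by norm_num) _
    rw [hdiv] at key
    have h2p : (0:ℝ) < (2:ℝ) ^ (α+1) := Real.rpow_pos_of_pos (by norm_num) _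
    calc (n:ℝ) ^ (α+1) = ((n:ℝ) ^ (α+1) / (2:ℝ)^(α+1)) * (2:ℝ)^(α+1) := by field_simp
      _ ≤ del α n * (2:ℝ)^(α+1) := by exact mul_le_mul_of_nonneg_right key h2p.le
      _ = (2:ℝ)^(α+1) * del α n := by ring
  · -- α < 0 : every term is at least n^α
    have hterm : ∀ i ∈ Finset.Icc 1 n, (n:ℝ) ^ α ≤ (i:ℝ) ^ α := by
      intro i hi
      obtain ⟨h1, h2⟩ := Finset.mem_Icc.mp hi
      exact Real.rpow_le_rpow_of_nonpos (by exact_mod_cast h1) (by exact_mod_cast h2) hneg.le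
    have hsum : (n:ℝ) * (n:ℝ) ^ α ≤ del α n := by
      calc (n:ℝ) * (n:ℝ) ^ α = (Finset.Icc 1 n).card • (n:ℝ) ^ α := by
            rw [Nat.card_Icc]; simp [nsmul_eq_mul]
        _ ≤ del α n := Finset.card_nsmul_le_sum _ _ _ hterm
    have h1 : (n:ℝ) ^ (α+1) = (n:ℝ) ^ α * n := Real.rpow_add_one (by positivity) α
    have h2 : (1:ℝ) ≤ (2:ℝ) ^ (α+1) := by
      have := Real.rpow_le_rpow_of_exponent_le (x := 2) (by norm_num) (by linarith : (0:ℝ) ≤ α + 1)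
      rwa [Real.rpow_zero] at this
    nlinarith [del_nonneg (α := α) n]



/-- `del (D*n)` is at most a constant multiple of `del n`. -/
lemma del_scale (hα : -1 ≤ α) (D : ℕ) (hD : 1 ≤ D) :
    ∃ C : ℝ, 0 < C ∧ ∀ n : ℕ, 1 ≤ n → del α (D * n) ≤ C * del α n := by
  classical
  set c1 : ℝ := max 1 ((D:ℝ) ^ α) with hc1
  have hc1pos : 0 < c1 := lt_of_lt_of_le one_pos (le_max_left _ _)
  refine ⟨1 + (D:ℝ) * c1 * 2 ^ (α+1), by positivity, fun n hn => ?_⟩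
  have hn0 : (0:ℝ) < n := by exact_mod_cast hn
  have hunion : Finset.Icc 1 (D * n) = Finset.Icc 1 n ∪ Finset.Ioc n (D * n) := by
    ext i
    simp only [Finset.mem_Icc, Finset.mem_union, Finset.mem_Ioc]
    have : n ≤ D * n := Nat.le_mul_of_pos_left n (by omega)
    omega
  have hdisj : Disjoint (Finset.Icc 1 n) (Finset.Ioc n (D * n)) := by
    rw [Finset.disjoint_left]
    intro i hi hi2
    rw [Finset.mem_Icc] at hi
    rw [Finset.mem_Ioc] at hi2
    omega
  have hsplit : del α (D * n) = del α n + ∑ i ∈ Finset.Ioc n (D * n), (i:ℝ) ^ α := by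
    unfold del
    rw [hunion, Finset.sum_union hdisj]
  have hterm : ∀ i ∈ Finset.Ioc n (D * n), (i:ℝ) ^ α ≤ c1 * (n:ℝ) ^ α := by
    intro i hi
    obtain ⟨h1, h2⟩ := Finset.mem_Ioc.mp hi
    rcases le_or_gt 0 α with hpos | hneg
    · have : (i:ℝ) ^ α ≤ ((D * n : ℕ):ℝ) ^ α :=
        Real.rpow_le_rpow (by positivity) (by exact_mod_cast h2) hpos
      calc (i:ℝ) ^ α ≤ ((D * n : ℕ):ℝ) ^ α := this
        _ = (D:ℝ) ^ α * (n:ℝ) ^ α := by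
            push_cast; exact Real.mul_rpow (by positivity) (by positivity)
        _ ≤ c1 * (n:ℝ) ^ α := by
            apply mul_le_mul_of_nonneg_right (le_max_right _ _) (w_nonneg n)
    · have : (i:ℝ) ^ α ≤ (n:ℝ) ^ α :=
        Real.rpow_le_rpow_of_nonpos hn0 (by exact_mod_cast h1.le) hneg.le
      calc (i:ℝ) ^ α ≤ (n:ℝ) ^ α := this
        _ = 1 * (n:ℝ) ^ α := (one_mul _).symm
        _ ≤ c1 * (n:ℝ) ^ α := by
            apply mul_le_mul_of_nonneg_right (le_max_left _ _) (w_nonneg n)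
  have hcard : ((Finset.Ioc n (D * n)).card : ℝ) ≤ (D:ℝ) * n := by
    rw [Nat.card_Ioc]
    have : D * n - n ≤ D * n := by omega
    exact_mod_cast this
  have hsum : ∑ i ∈ Finset.Ioc n (D * n), (i:ℝ) ^ α ≤ (D:ℝ) * n * (c1 * (n:ℝ) ^ α) := by
    calc ∑ i ∈ Finset.Ioc n (D * n), (i:ℝ) ^ α
        ≤ (Finset.Ioc n (D * n)).card • (c1 * (n:ℝ) ^ α) :=
          Finset.sum_le_card_nsmul _ _ _ hterm
      _ = ((Finset.Ioc n (D * n)).card : ℝ) * (c1 * (n:ℝ) ^ α) := nsmul_eq_mul _ _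
      _ ≤ (D:ℝ) * n * (c1 * (n:ℝ) ^ α) := by
          apply mul_le_mul_of_nonneg_right hcard (by positivity)
  have hrpow : (n:ℝ) * (n:ℝ) ^ α = (n:ℝ) ^ (α + 1) := by
    rw [Real.rpow_add_one (by positivity) α]; ring
  have hng : (n:ℝ) ^ (α+1) ≤ 2 ^ (α+1) * del α n := rpow_le_del hα hn
  calc del α (D * n) = del α n + ∑ i ∈ Finset.Ioc n (D * n), (i:ℝ) ^ α := hsplit
    _ ≤ del α n + (D:ℝ) * n * (c1 * (n:ℝ) ^ α) := by linarith
    _ = del α n + (D:ℝ) * c1 * ((n:ℝ) * (n:ℝ) ^ α) := by ring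
    _ = del α n + (D:ℝ) * c1 * (n:ℝ) ^ (α+1) := by rw [hrpow]
    _ ≤ del α n + (D:ℝ) * c1 * (2 ^ (α+1) * del α n) := by
        apply add_le_add (le_refl _)
        apply mul_le_mul_of_nonneg_left hng (by positivity)
    _ = (1 + (D:ℝ) * c1 * 2 ^ (α+1)) * del α n := by ring

/-- For `α ≥ 0`, `del n ≤ n^(α+1)`. -/
lemma del_le_rpow (hpos : 0 ≤ α) (n : ℕ) : del α n ≤ (n:ℝ) ^ (α + 1) := by
  rcases Nat.eq_zero_or_pos n with h | h
  · subst h; simp [del, Real.rpow_natCast]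
    rw [Real.zero_rpow (by linarith : α + 1 ≠ 0)]
  have hn0 : (0:ℝ) < n := by exact_mod_cast h
  have : del α n ≤ (Finset.Icc 1 n).card • (n:ℝ) ^ α := by
    apply Finset.sum_le_card_nsmul
    intro i hi
    obtain ⟨_, h2⟩ := Finset.mem_Icc.mp hi
    exact Real.rpow_le_rpow (by positivity) (by exact_mod_cast h2) hpos
  calc del α n ≤ (Finset.Icc 1 n).card • (n:ℝ) ^ α := this
    _ = (n:ℝ) * (n:ℝ) ^ α := by rw [Nat.card_Icc]; simp [nsmul_eq_mul]
    _ = (n:ℝ) ^ (α+1) := by rw [Real.rpow_add_one (by positivity) α]; ring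

lemma numer_eq_filter (S : Set ℕ) (n : ℕ) [DecidablePred (· ∈ S)] :
    numer α S n = ∑ i ∈ (Finset.Icc 1 n).filter (· ∈ S), (i:ℝ) ^ α := by
  unfold numer
  rw [Finset.sum_filter]
  refine Finset.sum_congr rfl fun i _ => ?_
  by_cases hi : i ∈ S
  · rw [Set.indicator_of_mem hi, if_pos hi]
  · rw [Set.indicator_of_notMem hi, if_neg hi]

/-- The numerator is at most the sum over the enumeration indices. -/
lemma numer_le_enumSum (S : Set ℕ) [DecidablePred (· ∈ S)] (hS : (setOf (· ∈ S)).Infinite)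
    (n : ℕ) :
    numer α S n ≤ ∑ j ∈ Finset.range (Nat.count (· ∈ S) (n+1)), ((Nat.nth (· ∈ S) j : ℝ)) ^ α := by
  rw [numer_eq_filter]
  have hsub : (Finset.Icc 1 n).filter (· ∈ S)
      ⊆ (Finset.range (Nat.count (· ∈ S) (n+1))).image (Nat.nth (· ∈ S)) := by
    intro i hi
    rw [Finset.mem_filter] at hi
    obtain ⟨hi1, hi2⟩ := hi
    obtain ⟨hge, hle⟩ := Finset.mem_Icc.mp hi1
    refine Finset.mem_image.mpr ⟨Nat.count (· ∈ S) i, ?_, Nat.nth_count hi2⟩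
    rw [Finset.mem_range]
    have h1 : Nat.count (· ∈ S) (i+1) ≤ Nat.count (· ∈ S) (n+1) :=
      Nat.count_monotone _ (by omega)
    have h2 : Nat.count (· ∈ S) (i+1) = Nat.count (· ∈ S) i + 1 := by
      rw [Nat.count_succ, if_pos hi2]
    omega
  calc ∑ i ∈ (Finset.Icc 1 n).filter (· ∈ S), (i:ℝ) ^ α
      ≤ ∑ i ∈ (Finset.range (Nat.count (· ∈ S) (n+1))).image (Nat.nth (· ∈ S)), (i:ℝ) ^ α :=
        Finset.sum_le_sum_of_subset_of_nonneg hsub (fun i _ _ => w_nonneg i)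
    _ = ∑ j ∈ Finset.range (Nat.count (· ∈ S) (n+1)), ((Nat.nth (· ∈ S) j : ℝ)) ^ α :=
        Finset.sum_image (fun a _ b _ hab => Nat.nth_injective hS hab)

/-- Sums over injections into `X ∩ [1, N]` bound `numer X N` from below. -/
lemma enumSum_le_numer (X : Set ℕ) (ξ : ℕ → ℕ) (hinj : Function.Injective ξ)
    (T : Finset ℕ) (N : ℕ) (hmem : ∀ i ∈ T, ξ i ∈ X)
    (hbd : ∀ i ∈ T, 1 ≤ ξ i ∧ ξ i ≤ N) :
    ∑ i ∈ T, ((ξ i : ℝ)) ^ α ≤ numer α X N := by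
  classical
  have h1 : ∑ i ∈ T, ((ξ i : ℝ)) ^ α
      = ∑ j ∈ T.image ξ, X.indicator (fun i : ℕ => (i : ℝ) ^ α) j := by
    rw [Finset.sum_image (fun a _ b _ hab => hinj hab)]
    refine Finset.sum_congr rfl fun i hi => ?_
    rw [Set.indicator_of_mem (hmem i hi)]
  rw [h1]
  unfold numer
  apply Finset.sum_le_sum_of_subset_of_nonneg
  · intro j hj
    obtain ⟨i, hi, rfl⟩ := Finset.mem_image.mp hj
    exact Finset.mem_Icc.mpr (hbd i hi)
  · exact fun i _ _ => ind_nonneg X i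

/-- Finite sets lie in the ideal. -/
lemma finite_mem (hα : -1 ≤ α) (S : Set ℕ) (hS : S.Finite) :
    limsup (aden α S) atTop = 0 := by
  classical
  set E : ℝ := ∑ i ∈ hS.toFinset, (i:ℝ) ^ α with hE
  have hnum : ∀ n : ℕ, numer α S n ≤ E := by
    intro n
    rw [numer_eq_filter]
    apply Finset.sum_le_sum_of_subset_of_nonneg
    · intro i hi
      rw [Finset.mem_filter] at hi
      exact hS.mem_toFinset.mpr hi.2
    · exact fun i _ _ => w_nonneg i
  have hlim : Tendsto (fun n : ℕ => E / del α n) atTop (𝓝 0) :=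
    Tendsto.div_atTop tendsto_const_nhds (del_tendsto hα)
  have hT : Tendsto (aden α S) atTop (𝓝 0) := by
    apply tendsto_of_tendsto_of_tendsto_of_le_of_le' tendsto_const_nhds hlim
    · exact Eventually.of_forall fun n => aden_nonneg S n
    · filter_upwards [eventually_ge_atTop 1] with n hn
      rw [aden, div_le_div_iff_of_pos_right (del_pos hn)]
      exact hnum n
  exact hT.limsup_eq



lemma master (hα : -1 ≤ α) (X Y : Set ℕ) (hY : Y.Infinite)
    (ξ : ℕ → ℕ) (hξ : StrictMono ξ) (hmemX : ∀ i, ξ i ∈ X) (D : ℕ) (hD : 1 ≤ D)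
    (hcomp : ∀ i, ξ i ≤ D * Nat.nth (· ∈ Y) (D * (i + 1)))
    (hL : limsup (aden α Y) atTop ≠ 0) : limsup (aden α X) atTop ≠ 0 := by
  classical
  have hYinf : (setOf (· ∈ Y)).Infinite := by exact hY
  set y : ℕ → ℕ := Nat.nth (· ∈ Y) with hy
  have hymono : StrictMono y := Nat.nth_strictMono hYinf
  have hD0 : (0:ℝ) < (D:ℝ) := by exact_mod_cast hD
  have hbY : IsBoundedUnder (· ≤ ·) atTop (aden α Y) :=
    ⟨1, Filter.eventually_map.mpr (Eventually.of_forall (aden_le_one Y))⟩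
  have hbX : IsBoundedUnder (· ≤ ·) atTop (aden α X) :=
    ⟨1, Filter.eventually_map.mpr (Eventually.of_forall (aden_le_one X))⟩
  have hcobY : IsCoboundedUnder (· ≤ ·) atTop (aden α Y) :=
    isCoboundedUnder_le_of_le atTop (fun n => aden_nonneg Y n)
  set L := limsup (aden α Y) atTop with hLdef
  have hL0 : 0 ≤ L :=
    le_limsup_of_frequently_le (Eventually.of_forall (aden_nonneg Y)).frequently hbY
  have hLpos : 0 < L := lt_of_le_of_ne hL0 (Ne.symm hL)
  have hfreq : ∃ᶠ n in atTop, L / 2 < aden α Y n :=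
    frequently_lt_of_lt_limsup hcobY (half_lt_self hLpos)
  suffices h : ∃ δ : ℝ, 0 < δ ∧ ∃ᶠ N in atTop, δ ≤ aden α X N by
    obtain ⟨δ, hδ, hfr⟩ := h
    have h2 := le_limsup_of_frequently_le hfr hbX
    exact fun h0 => (not_le.mpr hδ) (h0 ▸ h2)
  -- generic facts used in both cases
  have hcount : ∀ n j : ℕ, j < Nat.count (· ∈ Y) (n+1) → y j ≤ n := fun n j hj =>
    Nat.lt_succ_iff.mp (Nat.nth_lt_of_lt_count hj)
  rcases le_or_gt 0 α with hpos | hneg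
  · -- CASE α ≥ 0
    set B : ℝ := (2:ℝ) ^ (α + 1) with hB
    have hBpos : (0:ℝ) < B := Real.rpow_pos_of_pos (by norm_num) _
    set ε : ℝ := L / (2 * B) with hε
    have hεpos : 0 < ε := by positivity
    refine ⟨(ε / (8 * D * D)) ^ (α + 1), Real.rpow_pos_of_pos (by positivity) _, ?_⟩
    have hev : ∀ᶠ n : ℕ in atTop, 1 ≤ n ∧ 8 * (D:ℝ) / ε ≤ (n:ℝ) :=
      (eventually_ge_atTop 1).and
        (tendsto_natCast_atTop_atTop.eventually_ge_atTop (8 * (D:ℝ) / ε))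
    have hmain := hfreq.and_eventually hev
    rw [frequently_atTop] at hmain ⊢
    intro M
    obtain ⟨n, hnM, hgood, hn1, hnlarge⟩ := hmain M
    refine ⟨D * n, le_trans hnM (Nat.le_mul_of_pos_left n (by omega)), ?_⟩
    have hd := del_pos (α := α) hn1
    have hn0 : (0:ℝ) < (n:ℝ) := by exact_mod_cast hn1
    rw [aden, lt_div_iff₀ hd] at hgood
    set m := Nat.count (· ∈ Y) (n+1) with hm
    have hnum2 : numer α Y n ≤ ∑ j ∈ Finset.range m, ((y j : ℝ)) ^ α :=
      numer_le_enumSum Y hYinf n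
    have hsum_ub : ∑ j ∈ Finset.range m, ((y j : ℝ)) ^ α ≤ (m:ℝ) * (n:ℝ) ^ α := by
      calc ∑ j ∈ Finset.range m, ((y j : ℝ)) ^ α
          ≤ (Finset.range m).card • ((n:ℝ) ^ α) := by
            apply Finset.sum_le_card_nsmul
            intro j hj
            rw [Finset.mem_range] at hj
            exact Real.rpow_le_rpow (by positivity) (by exact_mod_cast hcount n j hj) hpos
        _ = (m:ℝ) * (n:ℝ) ^ α := by rw [Finset.card_range, nsmul_eq_mul]
    have hna : (0:ℝ) < (n:ℝ) ^ α := w_pos hn1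
    have hεn : 8 * (D:ℝ) ≤ ε * n := by
      rw [div_le_iff₀ hεpos] at hnlarge; linarith
    -- lower bound on m
    have hmlb : ε * (n:ℝ) ≤ (m:ℝ) := by
      have h1 : (n:ℝ) ^ (α+1) ≤ B * del α n := rpow_le_del hα hn1
      have h2 : (n:ℝ) ^ (α+1) = (n:ℝ) ^ α * n := Real.rpow_add_one (ne_of_gt hn0) α
      have h4 : (n:ℝ) ^ α * n / B ≤ del α n := by
        rw [div_le_iff₀ hBpos, ← h2]
        calc (n:ℝ)^(α+1) ≤ B * del α n := h1
          _ = del α n * B := by ring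
      have h5 : L/2 * ((n:ℝ)^α * n / B) < (m:ℝ) * (n:ℝ)^α := by
        calc L/2 * ((n:ℝ)^α * n / B) ≤ L/2 * del α n :=
              mul_le_mul_of_nonneg_left h4 (by positivity)
          _ < numer α Y n := hgood
          _ ≤ (m:ℝ) * (n:ℝ)^α := le_trans hnum2 hsum_ub
      have h6 : (ε * n) * (n:ℝ)^α < (m:ℝ) * (n:ℝ)^α := by
        have : (ε * n) * (n:ℝ)^α = L/2 * ((n:ℝ)^α * n / B) := by
          rw [hε]; field_simp
        rw [this]; exact h5
      exact le_of_lt (lt_of_mul_lt_mul_right h6 hna.le)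
    set s := m / (4 * D) with hs
    have h4Ds : s * (4 * D) ≤ m := Nat.div_mul_le_self m (4 * D)
    have hm4 : (m:ℝ) < 4 * (D:ℝ) * s + 4 * D := by
      have h1 : m % (4 * D) < 4 * D := Nat.mod_lt m (by omega)
      have h2 : 4 * D * s + m % (4 * D) = m := Nat.div_add_mod m (4 * D)
      have h2' : (4 * (D:ℝ)) * (s:ℝ) + ((m % (4 * D) : ℕ):ℝ) = (m:ℝ) := by
        exact_mod_cast h2
      have h1' : ((m % (4 * D) : ℕ):ℝ) < 4 * (D:ℝ) := by exact_mod_cast h1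
      linarith
    have hslb : ε * (n:ℝ) / (8 * D) ≤ (s:ℝ) := by
      rw [div_le_iff₀ (by positivity)]
      nlinarith
    have hs1 : 1 ≤ s := by
      have h1 : (1:ℝ) ≤ ε * n / (8 * D) := by
        rw [le_div_iff₀ (by positivity)]; linarith
      have : (1:ℝ) ≤ (s:ℝ) := le_trans h1 hslb
      exact_mod_cast this
    have hsR : (0:ℝ) < (s:ℝ) := by exact_mod_cast hs1
    -- window sum
    have hwin : ∀ i ∈ Finset.Ico s (2*s), 1 ≤ ξ i ∧ ξ i ≤ D * n := by
      intro i hi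
      rw [Finset.mem_Ico] at hi
      obtain ⟨hi1, hi2⟩ := hi
      have hξi : i ≤ ξ i := hξ.le_apply
      have hDi : D * (i+1) < m := by
        have e1 : D * (i + 1) ≤ 2 * (D * s) := by
          calc D * (i+1) ≤ D * (2*s) := Nat.mul_le_mul_left D (by omega)
            _ = 2 * (D * s) := by ring
        have e2 : 4 * (D * s) ≤ m := by
          calc 4 * (D * s) = s * (4 * D) := by ring
            _ ≤ m := h4Ds
        have e3 : 0 < D * s := Nat.mul_pos (by omega) (by omega)
        linarith
      refine ⟨by omega, ?_⟩
      calc ξ i ≤ D * y (D * (i+1)) := hcomp i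
        _ ≤ D * n := Nat.mul_le_mul_left D (hcount n _ hDi)
    have hww : ∀ i ∈ Finset.Ico s (2*s), (s:ℝ) ^ α ≤ ((ξ i : ℝ)) ^ α := by
      intro i hi
      rw [Finset.mem_Ico] at hi
      have : s ≤ ξ i := le_trans hi.1 hξ.le_apply
      exact Real.rpow_le_rpow (by positivity) (by exact_mod_cast this) hpos
    have hsum_lb : (s:ℝ) ^ (α+1) ≤ ∑ i ∈ Finset.Ico s (2*s), ((ξ i : ℝ)) ^ α := by
      have h1 := Finset.card_nsmul_le_sum _ _ _ hww
      rw [Nat.card_Ico] at h1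
      have h2 : 2 * s - s = s := by omega
      rw [h2, nsmul_eq_mul] at h1
      calc (s:ℝ)^(α+1) = (s:ℝ)^α * s := Real.rpow_add_one (ne_of_gt hsR) α
        _ = (s:ℝ) * (s:ℝ)^α := by ring
        _ ≤ _ := h1
    have hnumX : (s:ℝ) ^ (α+1) ≤ numer α X (D * n) :=
      le_trans hsum_lb
        (enumSum_le_numer X ξ hξ.injective _ (D*n) (fun i _ => hmemX i) hwin)
    have hDn1 : 1 ≤ D * n := le_trans hD (Nat.le_mul_of_pos_right D (by omega))
    have hdDn := del_pos (α := α) hDn1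
    have hDn0 : (0:ℝ) < ((D*n : ℕ):ℝ) := by exact_mod_cast hDn1
    have hdel_ub : del α (D*n) ≤ ((D*n : ℕ):ℝ) ^ (α+1) := del_le_rpow hpos (D*n)
    -- final chain
    rw [aden, le_div_iff₀ hdDn]
    have hq : (0:ℝ) ≤ (ε / (8*D*D)) ^ (α+1) := Real.rpow_nonneg (by positivity) _
    calc (ε / (8*D*D)) ^ (α+1) * del α (D*n)
        ≤ (ε / (8*D*D)) ^ (α+1) * ((D*n : ℕ):ℝ) ^ (α+1) :=
          mul_le_mul_of_nonneg_left hdel_ub hq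
      _ = ((ε / (8*D*D)) * ((D*n : ℕ):ℝ)) ^ (α+1) :=
          (Real.mul_rpow (by positivity) (by positivity)).symm
      _ = (ε * (n:ℝ) / (8*D)) ^ (α+1) := by
          congr 1
          push_cast
          field_simp
      _ ≤ (s:ℝ) ^ (α+1) := Real.rpow_le_rpow (by positivity) hslb (by linarith)
      _ ≤ numer α X (D*n) := hnumX
  · -- CASE α < 0
    obtain ⟨C, hC, hCle⟩ := del_scale hα D hD
    set c2 : ℝ := (D:ℝ) * (D:ℝ) ^ (-α) with hc2
    have hc2pos : 0 < c2 := mul_pos hD0 (Real.rpow_pos_of_pos hD0 _)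
    refine ⟨L / (4 * c2 * C), by positivity, ?_⟩
    have hev : ∀ᶠ n : ℕ in atTop, 1 ≤ n ∧ 8 * (D:ℝ) / L ≤ del α n :=
      (eventually_ge_atTop 1).and ((del_tendsto hα).eventually_ge_atTop (8 * (D:ℝ) / L))
    have hmain := hfreq.and_eventually hev
    rw [frequently_atTop] at hmain ⊢
    intro M
    obtain ⟨n, hnM, hgood, hn1, hdel⟩ := hmain M
    refine ⟨D * n, le_trans hnM (Nat.le_mul_of_pos_left n (by omega)), ?_⟩
    have hd := del_pos (α := α) hn1
    rw [aden, lt_div_iff₀ hd] at hgood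
    have hdel' : 8 * (D:ℝ) ≤ L * del α n := by
      rw [div_le_iff₀ hLpos] at hdel; linarith
    set m := Nat.count (· ∈ Y) (n+1) with hm
    have hnum2 : numer α Y n ≤ ∑ j ∈ Finset.range m, ((y j : ℝ)) ^ α :=
      numer_le_enumSum Y hYinf n
    have hone : ∀ j : ℕ, ((y j : ℝ)) ^ α ≤ 1 := by
      intro j
      rcases Nat.eq_zero_or_pos (y j) with h0 | h0
      · rw [h0]
        push_cast
        rw [Real.zero_rpow (ne_of_lt hneg)]
        norm_num
      · exact Real.rpow_le_one_of_one_le_of_nonpos (by exact_mod_cast h0) hneg.le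
    -- if m is small, contradiction with the largeness of del
    by_cases hm2D : m ≤ 2 * D
    · exfalso
      have h1 : ∑ j ∈ Finset.range m, ((y j : ℝ)) ^ α ≤ (m:ℝ) := by
        have := Finset.sum_le_card_nsmul (Finset.range m) (fun j => ((y j : ℝ)) ^ α) 1
          (fun j _ => hone j)
        rw [Finset.card_range, nsmul_eq_mul, mul_one] at this
        exact this
      have h2 : (m:ℝ) ≤ 2 * D := by exact_mod_cast hm2D
      nlinarith
    push_neg at hm2D
    -- split the enumeration sum
    have hsplit : ∑ j ∈ Finset.range m, ((y j : ℝ)) ^ α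
        = ∑ j ∈ Finset.range (2*D), ((y j : ℝ)) ^ α
          + ∑ j ∈ Finset.Ico (2*D) m, ((y j : ℝ)) ^ α := by
      rw [Finset.range_eq_Ico, Finset.range_eq_Ico]
      exact (Finset.sum_Ico_consecutive _ (Nat.zero_le (2*D)) (le_of_lt hm2D)).symm
    have hhead : ∑ j ∈ Finset.range (2*D), ((y j : ℝ)) ^ α ≤ 2 * (D:ℝ) := by
      have := Finset.sum_le_card_nsmul (Finset.range (2*D)) (fun j => ((y j : ℝ)) ^ α) 1
        (fun j _ => hone j)
      rw [Finset.card_range, nsmul_eq_mul, mul_one] at this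
      calc ∑ j ∈ Finset.range (2*D), ((y j : ℝ)) ^ α ≤ ((2*D : ℕ):ℝ) := this
        _ = 2 * (D:ℝ) := by push_cast; ring
    -- per-term comparison on the tail
    have hDinv : (0:ℝ) < (D:ℝ) ^ (-α) := Real.rpow_pos_of_pos hD0 _
    have hidx : ∀ j, 2*D ≤ j → 1 ≤ j / D - 1 ∧ D * ((j / D - 1) + 1) ≤ j := by
      intro j hj
      have h1 : 2 ≤ j / D := (Nat.le_div_iff_mul_le (by omega)).mpr (by omega)
      have h2 : (j / D - 1) + 1 = j / D := by omega
      constructor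
      · omega
      · rw [h2]
        calc D * (j / D) = (j / D) * D := by ring
          _ ≤ j := Nat.div_mul_le_self j D
    have htail : ∑ j ∈ Finset.Ico (2*D) m, ((y j : ℝ)) ^ α
        ≤ (D:ℝ) ^ (-α) * ∑ j ∈ Finset.Ico (2*D) m, ((ξ (j / D - 1) : ℝ)) ^ α := by
      rw [Finset.mul_sum]
      apply Finset.sum_le_sum
      intro j hj
      rw [Finset.mem_Ico] at hj
      obtain ⟨hidx1, hidx2⟩ := hidx j hj.1
      have hξle : ξ (j / D - 1) ≤ D * y j :=
        le_trans (hcomp _) (Nat.mul_le_mul_left D (hymono.monotone hidx2))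
      have hξpos : 0 < ξ (j / D - 1) := lt_of_lt_of_le hidx1 hξ.le_apply
      have hyj1 : 1 ≤ y j := le_trans (by omega : 1 ≤ j) hymono.le_apply
      have key : ((D:ℝ) * ((y j : ℝ))) ^ α ≤ ((ξ (j / D - 1) : ℝ)) ^ α := by
        apply Real.rpow_le_rpow_of_nonpos (by exact_mod_cast hξpos) ?_ hneg.le
        have : (ξ (j / D - 1) : ℝ) ≤ ((D * y j : ℕ):ℝ) := by exact_mod_cast hξle
        push_cast at this
        exact this
      have hmulr : ((D:ℝ) * ((y j : ℝ))) ^ α = (D:ℝ) ^ α * ((y j : ℝ)) ^ α :=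
        Real.mul_rpow (by positivity) (by positivity)
      have hexp : (D:ℝ) ^ (-α) * (D:ℝ) ^ α = 1 := by
        rw [← Real.rpow_add hD0]; simp
      calc ((y j : ℝ)) ^ α = (D:ℝ) ^ (-α) * ((D:ℝ) ^ α * ((y j : ℝ)) ^ α) := by
            rw [← mul_assoc, hexp, one_mul]
        _ = (D:ℝ) ^ (-α) * ((D:ℝ) * ((y j : ℝ))) ^ α := by rw [hmulr]
        _ ≤ (D:ℝ) ^ (-α) * ((ξ (j / D - 1) : ℝ)) ^ α :=
            mul_le_mul_of_nonneg_left key hDinv.le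
    -- group the tail sum by the fiber map
    set T := (Finset.Ico (2*D) m).image (fun j => j / D - 1) with hT
    have hgroup : ∑ j ∈ Finset.Ico (2*D) m, ((ξ (j / D - 1) : ℝ)) ^ α
        ≤ (D:ℝ) * ∑ i ∈ T, ((ξ i : ℝ)) ^ α := by
      rw [Finset.sum_comp (fun i => ((ξ i : ℝ)) ^ α) (fun j => j / D - 1), Finset.mul_sum]
      apply Finset.sum_le_sum
      intro i hi
      have hcard : ((Finset.Ico (2*D) m).filter (fun j => j / D - 1 = i)).card ≤ D := by
        have hsub2 : (Finset.Ico (2*D) m).filter (fun j => j / D - 1 = i)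
            ⊆ Finset.Ico (D*(i+1)) (D*(i+1)+D) := by
          intro j hj
          rw [Finset.mem_filter, Finset.mem_Ico] at hj
          obtain ⟨⟨hj1, hj2⟩, hj3⟩ := hj
          rw [Finset.mem_Ico]
          have h1 : 2 ≤ j / D := (Nat.le_div_iff_mul_le (by omega)).mpr (by omega)
          have h2 : j / D = i + 1 := by omega
          constructor
          · rw [← h2]
            calc D * (j / D) = (j / D) * D := by ring
              _ ≤ j := Nat.div_mul_le_self j D
          · have h3 : j / D < i + 2 := by omega
            have h4 : j < (i+2) * D := (Nat.div_lt_iff_lt_mul (by omega)).mp h3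
            calc j < (i+2) * D := h4
              _ = D * (i+1) + D := by ring
        calc ((Finset.Ico (2*D) m).filter (fun j => j / D - 1 = i)).card
            ≤ (Finset.Ico (D*(i+1)) (D*(i+1)+D)).card := Finset.card_le_card hsub2
          _ = D := by rw [Nat.card_Ico]; omega
      rw [nsmul_eq_mul]
      apply mul_le_mul_of_nonneg_right _ (w_nonneg _)
      exact_mod_cast hcard
    -- the selected indices give elements of X in [1, D*n]
    have hTprop : ∀ i ∈ T, 1 ≤ ξ i ∧ ξ i ≤ D * n := by
      intro i hi
      obtain ⟨j, hj, rfl⟩ := Finset.mem_image.mp hi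
      rw [Finset.mem_Ico] at hj
      obtain ⟨hidx1, hidx2⟩ := hidx j hj.1
      have hξle : ξ (j / D - 1) ≤ D * y j :=
        le_trans (hcomp _) (Nat.mul_le_mul_left D (hymono.monotone hidx2))
      refine ⟨le_trans hidx1 hξ.le_apply, ?_⟩
      calc ξ (j / D - 1) ≤ D * y j := hξle
        _ ≤ D * n := Nat.mul_le_mul_left D (hcount n j hj.2)
    have hTnum : ∑ i ∈ T, ((ξ i : ℝ)) ^ α ≤ numer α X (D * n) :=
      enumSum_le_numer X ξ hξ.injective T (D*n) (fun i _ => hmemX i) hTprop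
    -- combine everything
    have hts : 0 ≤ ∑ i ∈ T, ((ξ i : ℝ)) ^ α :=
      Finset.sum_nonneg fun i _ => w_nonneg _
    have hchain : L/2 * del α n < 2 * (D:ℝ) + c2 * numer α X (D * n) := by
      calc L/2 * del α n < numer α Y n := hgood
        _ ≤ ∑ j ∈ Finset.range m, ((y j : ℝ)) ^ α := hnum2
        _ = _ + _ := hsplit
        _ ≤ 2 * (D:ℝ) + (D:ℝ) ^ (-α) * ∑ j ∈ Finset.Ico (2*D) m, ((ξ (j / D - 1) : ℝ)) ^ α :=
            add_le_add hhead htail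
        _ ≤ 2 * (D:ℝ) + (D:ℝ) ^ (-α) * ((D:ℝ) * ∑ i ∈ T, ((ξ i : ℝ)) ^ α) := by
            apply add_le_add (le_refl _)
            exact mul_le_mul_of_nonneg_left hgroup hDinv.le
        _ ≤ 2 * (D:ℝ) + c2 * numer α X (D * n) := by
            apply add_le_add (le_refl _)
            rw [hc2]
            calc (D:ℝ) ^ (-α) * ((D:ℝ) * ∑ i ∈ T, ((ξ i : ℝ)) ^ α)
                = (D:ℝ) * (D:ℝ) ^ (-α) * ∑ i ∈ T, ((ξ i : ℝ)) ^ α := by ring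
              _ ≤ (D:ℝ) * (D:ℝ) ^ (-α) * numer α X (D * n) := by
                  apply mul_le_mul_of_nonneg_left hTnum (by positivity)
    have h2D : 2 * (D:ℝ) ≤ L/4 * del α n := by linarith
    have hXnum : L/4 * del α n ≤ c2 * numer α X (D * n) := by linarith
    -- final division chain
    have hDn1 : 1 ≤ D * n := le_trans hD (Nat.le_mul_of_pos_right D (by omega))
    have hdDn := del_pos (α := α) hDn1
    have hscale : del α (D * n) ≤ C * del α n := hCle n hn1
    rw [aden, le_div_iff₀ hdDn]
    have hnX : 0 ≤ numer α X (D * n) := numer_nonneg X _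
    calc L / (4 * c2 * C) * del α (D * n) ≤ L / (4 * c2 * C) * (C * del α n) := by
          apply mul_le_mul_of_nonneg_left hscale (by positivity)
      _ = L/4 * del α n / c2 := by field_simp
      _ ≤ numer α X (D * n) := by
          rw [div_le_iff₀ hc2pos]
          linarith



lemma density_growth (A : Set ℕ) (c : ℝ) (hc : c ≠ 0)
    (hA : Tendsto (fun n : ℕ => ((A ∩ Set.Icc 1 n).ncard : ℝ) / n) atTop (𝓝 c)) :
    A.Infinite ∧ ∃ D : ℕ, 1 ≤ D ∧ ∀ k, Nat.nth (· ∈ A) k ≤ D * (k + 1) := by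
  classical
  have hc0 : 0 ≤ c :=
    ge_of_tendsto' hA fun n => div_nonneg (Nat.cast_nonneg _) (Nat.cast_nonneg _)
  have hcpos : 0 < c := lt_of_le_of_ne hc0 (Ne.symm hc)
  -- counting versus ncard
  have hcnt : ∀ n : ℕ, (A ∩ Set.Icc 1 n).ncard ≤ Nat.count (· ∈ A) (n+1) := by
    intro n
    rw [Nat.count_eq_card_filter_range]
    have hsub : (A ∩ Set.Icc 1 n) ⊆ (((Finset.range (n+1)).filter (· ∈ A)) : Finset ℕ) := by
      intro i hi
      obtain ⟨hiA, hi1, hin⟩ := hi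
      simp only [Finset.coe_filter, Finset.mem_range, Set.mem_setOf_eq]
      exact ⟨by omega, hiA⟩
    calc (A ∩ Set.Icc 1 n).ncard
        ≤ ((((Finset.range (n+1)).filter (· ∈ A)) : Finset ℕ) : Set ℕ).ncard :=
          Set.ncard_le_ncard hsub (Set.toFinite _)
      _ = ((Finset.range (n+1)).filter (· ∈ A)).card := Set.ncard_coe_finset _
  -- A is infinite
  have hAinf : A.Infinite := by
    by_contra hfin
    rw [Set.not_infinite] at hfin
    have hle : ∀ n : ℕ, ((A ∩ Set.Icc 1 n).ncard : ℝ) ≤ (A.ncard : ℝ) := by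
      intro n
      exact_mod_cast Set.ncard_le_ncard Set.inter_subset_left hfin
    have h0 : Tendsto (fun n : ℕ => ((A ∩ Set.Icc 1 n).ncard : ℝ) / n) atTop (𝓝 0) := by
      apply tendsto_of_tendsto_of_tendsto_of_le_of_le' tendsto_const_nhds
        (tendsto_const_div_atTop_nhds_zero_nat (A.ncard : ℝ))
      · exact Eventually.of_forall fun n => div_nonneg (Nat.cast_nonneg _) (Nat.cast_nonneg _)
      · filter_upwards [eventually_ge_atTop 1] with n hn
        have hn0 : (0:ℝ) < (n:ℝ) := by exact_mod_cast hn
        exact (div_le_div_iff_of_pos_right hn0).mpr (hle n)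
    exact hc (tendsto_nhds_unique hA h0)
  -- eventual lower bound on the counting function
  have hev : ∀ᶠ n : ℕ in atTop, c / 2 < ((A ∩ Set.Icc 1 n).ncard : ℝ) / n :=
    hA.eventually (eventually_gt_nhds (half_lt_self hcpos))
  obtain ⟨n0, hn0⟩ := eventually_atTop.mp (hev.and (eventually_ge_atTop 1))
  set M := ⌈2/c⌉₊ with hM
  have hM1 : 0 < M := Nat.ceil_pos.mpr (by positivity)
  refine ⟨hAinf, n0 + 3*M, by omega, fun k => ?_⟩
  set n := n0 + M*(k+2) with hn
  obtain ⟨hratio, hn1⟩ := hn0 n (Nat.le_add_right n0 _)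
  have hnR : (0:ℝ) < (n:ℝ) := by exact_mod_cast hn1
  have hncard : c/2 * n < ((A ∩ Set.Icc 1 n).ncard : ℝ) := by
    rw [lt_div_iff₀ hnR] at hratio
    linarith
  have hMc : 2/c ≤ (M:ℝ) := Nat.le_ceil _
  have hnlb : ((k:ℝ)+2) ≤ c/2 * n := by
    have h1 : ((M*(k+2) : ℕ):ℝ) ≤ (n:ℝ) := by exact_mod_cast Nat.le_add_left _ n0
    have h2 : (M:ℝ) * ((k:ℝ)+2) ≤ (n:ℝ) := by push_cast at h1; linarith
    have h3 : (2/c) * ((k:ℝ)+2) ≤ (M:ℝ) * ((k:ℝ)+2) := by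
      apply mul_le_mul_of_nonneg_right hMc (by positivity)
    have h4 : (2/c) * ((k:ℝ)+2) ≤ (n:ℝ) := le_trans h3 h2
    have h5 : c/2 * ((2/c) * ((k:ℝ)+2)) ≤ c/2 * n :=
      mul_le_mul_of_nonneg_left h4 (by positivity)
    have h6 : c/2 * ((2/c) * ((k:ℝ)+2)) = (k:ℝ)+2 := by
      field_simp
    linarith
  have hcount : ((A ∩ Set.Icc 1 n).ncard : ℝ) ≤ (Nat.count (· ∈ A) (n+1) : ℝ) := by
    exact_mod_cast hcnt n
  have hklt : k < Nat.count (· ∈ A) (n+1) := by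
    have h7 : ((k:ℝ)+1) < (Nat.count (· ∈ A) (n+1) : ℝ) := by linarith
    have h8 : ((k:ℝ)+1) < (Nat.count (· ∈ A) (n+1) : ℝ) + 1 := by linarith
    have h9 : k + 1 < Nat.count (· ∈ A) (n+1) + 1 := by exact_mod_cast h8
    omega
  have hnth : Nat.nth (· ∈ A) k ≤ n := Nat.lt_succ_iff.mp (Nat.nth_lt_of_lt_count hklt)
  calc Nat.nth (· ∈ A) k ≤ n0 + M*(k+2) := hnth
    _ ≤ n0*(k+1) + M*(3*(k+1)) := by
        apply Nat.add_le_add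
        · exact Nat.le_mul_of_pos_right n0 (by omega)
        · exact Nat.mul_le_mul_left M (by omega)
    _ = (n0 + 3*M)*(k+1) := by ring


end IAux

/-- For every real `α ≥ -1`, the ideal `I_α` is thinnable. -/
theorem stmt2 (α : ℝ) (hα : -1 ≤ α) : Thinnable (alphaIdeal α) := by
  classical
  have hmemiff : ∀ S : Set ℕ, S ∉ alphaIdeal α ↔ limsup (IAux.aden α S) atTop ≠ 0 :=
    fun S => Iff.rfl
  have hinf : ∀ B : Set ℕ, B ∉ alphaIdeal α → B.Infinite := fun B hB => by
    by_contra hfin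
    rw [Set.not_infinite] at hfin
    exact ((hmemiff B).mp hB) (IAux.finite_mem hα B hfin)
  refine ⟨?_, ?_, ?_⟩
  · -- weakly thinnable
    rintro A B ⟨c, hc, hAc⟩ hB
    obtain ⟨hAinf, D1, hD1, hgrow⟩ := IAux.density_growth A c hc hAc
    have hBinf : B.Infinite := hinf B hB
    have hAinf' : (setOf (· ∈ A)).Infinite := by exact hAinf
    have hBinf' : (setOf (· ∈ B)).Infinite := by exact hBinf
    have hamono := Nat.nth_strictMono hAinf'
    have hbmono := Nat.nth_strictMono hBinf'
    have hcomp : ∀ i, Nat.nth (· ∈ A) (Nat.nth (· ∈ B) i)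
        ≤ (2*D1) * Nat.nth (· ∈ B) ((2*D1) * (i+1)) := by
      intro i
      set yy := Nat.nth (· ∈ B) ((2*D1) * (i+1)) with hyy
      have hidx : i ≤ (2*D1) * (i+1) :=
        le_trans (Nat.le_succ i) (Nat.le_mul_of_pos_left (i+1) (by omega))
      have h2 : Nat.nth (· ∈ B) i ≤ yy := hbmono.monotone hidx
      have h3 : 1 ≤ yy :=
        le_trans (Nat.mul_pos (by omega) (Nat.succ_pos i)) hbmono.le_apply
      calc Nat.nth (· ∈ A) (Nat.nth (· ∈ B) i) ≤ D1 * (Nat.nth (· ∈ B) i + 1) := hgrow _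
        _ ≤ D1 * (yy + 1) := Nat.mul_le_mul_left D1 (by omega)
        _ ≤ D1 * (2 * yy) := Nat.mul_le_mul_left D1 (by omega)
        _ = (2*D1) * yy := by ring
    exact (hmemiff _).mpr (IAux.master hα (idxSet A B) B hBinf
      (fun i => Nat.nth (· ∈ A) (Nat.nth (· ∈ B) i))
      (hamono.comp hbmono)
      (fun i => ⟨Nat.nth (· ∈ B) i, Nat.nth_mem_of_infinite hBinf' i, rfl⟩)
      (2*D1) (by omega) hcomp ((hmemiff B).mp hB))
  · -- thinning along a positive-density index set
    rintro A B ⟨c, hc, hAc⟩ hB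
    obtain ⟨hAinf, D1, hD1, hgrow⟩ := IAux.density_growth A c hc hAc
    have hBinf : B.Infinite := hinf B hB
    have hAinf' : (setOf (· ∈ A)).Infinite := by exact hAinf
    have hBinf' : (setOf (· ∈ B)).Infinite := by exact hBinf
    have hamono := Nat.nth_strictMono hAinf'
    have hbmono := Nat.nth_strictMono hBinf'
    have hcomp : ∀ i, Nat.nth (· ∈ B) (Nat.nth (· ∈ A) i)
        ≤ D1 * Nat.nth (· ∈ B) (D1 * (i+1)) := by
      intro i
      have h1 : Nat.nth (· ∈ A) i ≤ D1 * (i+1) := hgrow i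
      calc Nat.nth (· ∈ B) (Nat.nth (· ∈ A) i)
          ≤ Nat.nth (· ∈ B) (D1*(i+1)) := hbmono.monotone h1
        _ ≤ D1 * Nat.nth (· ∈ B) (D1*(i+1)) := Nat.le_mul_of_pos_left _ (by omega)
    exact (hmemiff _).mpr (IAux.master hα (idxSet B A) B hBinf
      (fun i => Nat.nth (· ∈ B) (Nat.nth (· ∈ A) i))
      (hbmono.comp hamono)
      (fun i => ⟨Nat.nth (· ∈ A) i, Nat.nth_mem_of_infinite hAinf' i, rfl⟩)
      D1 hD1 hcomp ((hmemiff B).mp hB))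
  · -- monotonicity under `seqLE`
    intro X Y hX hY hle hYni
    have hXinf' : (setOf (· ∈ X)).Infinite := by exact hX
    have hYinf' : (setOf (· ∈ Y)).Infinite := by exact hY
    have hcomp : ∀ i, Nat.nth (· ∈ X) i ≤ 1 * Nat.nth (· ∈ Y) (1 * (i+1)) := by
      intro i
      calc Nat.nth (· ∈ X) i ≤ Nat.nth (· ∈ Y) i := hle i
        _ ≤ Nat.nth (· ∈ Y) (1*(i+1)) := (Nat.nth_strictMono hYinf').monotone (by omega)
        _ = 1 * Nat.nth (· ∈ Y) (1*(i+1)) := (one_mul _).symm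
    exact (hmemiff _).mpr (IAux.master hα X Y hY
      (Nat.nth (· ∈ X)) (Nat.nth_strictMono hXinf')
      (fun i => Nat.nth_mem_of_infinite hXinf' i)
      1 le_rfl hcomp ((hmemiff Y).mp hYni))
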